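/- Let A be a real n×n matrix that is Hurwitz and let Q be a real symmetric positive definite n×n matrix. Then the matrix-valued function t ↦ exp(t·Aᵀ)·Q·exp(t·A) is integrable on [0, ∞), and the matrix P = ∫₀^∞ exp(t·Aᵀ)·Q·exp(t·A) dt is symmetric positive definite and satisfies the Lyapunov equation Aᵀ·P + P·A = -Q. -/

import Mathlib

open Matrix MeasureTheory

section HurwitzAux

attribute [local instance] Matrix.linftyOpNormedAddCommGroup Matrix.linftyOpNormedRing
  Matrix.linftyOpNormedAlgebra

variable {n : ℕ}

lemma entry_norm_le_linfty (M : Matrix (Fin n) (Fin n) ℂ) (i j : Fin n) : ‖M i j‖ ≤ ‖M‖ := by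
  rw [← coe_nnnorm, ← coe_nnnorm, NNReal.coe_le_coe, Matrix.linfty_opNNNorm_def]
  calc ‖M i j‖₊ ≤ ∑ j', ‖M i j'‖₊ :=
        Finset.single_le_sum (f := fun j' => ‖M i j'‖₊) (fun _ _ => zero_le) (Finset.mem_univ j)
    _ ≤ _ := Finset.le_sup (f := fun i => ∑ j', ‖M i j'‖₊) (Finset.mem_univ i)

lemma ode_step (B R : Matrix (Fin n) (Fin n) ℂ) (μ : ℂ) (hμ : μ.re < 0)
    (C lam : ℝ) (hlam : 0 < lam)
    (hb : ∀ t : ℝ, 0 ≤ t →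
      ‖NormedSpace.exp (t • B) * ((B - μ • 1) * R)‖ ≤ C * Real.exp (-lam * t)) :
    ∃ C' lam' : ℝ, 0 < lam' ∧ ∀ t : ℝ, 0 ≤ t →
      ‖NormedSpace.exp (t • B) * R‖ ≤ C' * Real.exp (-lam' * t) := by
  have hC : 0 ≤ C := le_trans (norm_nonneg _) (by simpa using hb 0 le_rfl)
  set ν : ℝ := μ.re with hνdef
  set lam' : ℝ := min lam (-ν) / 2 with hlam'def
  have hν : 0 < -ν := by linarith
  have hlam'pos : 0 < lam' := by
    have := lt_min hlam hν
    positivity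
  have hlam'le : lam' ≤ lam := by
    have h1 : min lam (-ν) ≤ lam := min_le_left _ _
    have h2 : 0 < min lam (-ν) := lt_min hlam hν
    simp only [hlam'def]; linarith
  set β : ℝ := -ν - lam' with hβdef
  have hβpos : 0 < β := by
    have : lam' ≤ -ν / 2 := by
      have := min_le_right lam (-ν); simp only [hlam'def]; linarith
    simp only [hβdef]; linarith
  have hνlam' : ν ≤ -lam' := by
    have : lam' ≤ -ν := by
      have : lam' ≤ -ν / 2 := by
        have := min_le_right lam (-ν); simp only [hlam'def]; linarith
      linarith
    linarith
  set G : ℝ → Matrix (Fin n) (Fin n) ℂ := fun t => NormedSpace.exp (t • B) * R with hGdef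
  set H : ℝ → Matrix (Fin n) (Fin n) ℂ :=
    fun t => NormedSpace.exp (t • B) * ((B - μ • 1) * R) with hHdef
  set E : ℝ → Matrix (Fin n) (Fin n) ℂ := fun t => Complex.exp (-(μ * t)) • G t with hEdef
  -- continuity
  have contexp : Continuous fun s : ℝ => NormedSpace.exp (s • B) :=
    NormedSpace.exp_continuous.comp (continuous_id.smul continuous_const)
  have contG : Continuous G := contexp.mul continuous_const
  have contH : Continuous H := contexp.mul continuous_const
  have contc : Continuous fun s : ℝ => Complex.exp (-(μ * s)) :=
    Complex.continuous_exp.comp ((continuous_const.mul Complex.continuous_ofReal).neg)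
  have contD : Continuous fun s : ℝ => Complex.exp (-(μ * s)) • H s := contc.smul contH
  -- derivative of E
  have hE : ∀ s : ℝ, HasDerivAt E (Complex.exp (-(μ * s)) • H s) s := by
    intro s
    have hG' : HasDerivAt G (B * NormedSpace.exp (s • B) * R) s :=
      (hasDerivAt_exp_smul_const' B s).mul_const R
    have h0 : HasDerivAt (fun t : ℝ => -(μ * (t : ℂ))) (-μ) s := by
      have h1 : HasDerivAt (fun t : ℝ => (t : ℂ)) 1 s := by
        exact Complex.ofRealCLM.hasDerivAt (x := s)
      have := (h1.const_mul μ).neg; simp only [mul_one] at this; exact this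
    have hc : HasDerivAt (fun t : ℝ => Complex.exp (-(μ * t)))
        (Complex.exp (-(μ * s)) * (-μ)) s := h0.cexp
    have hcomm : NormedSpace.exp (s • B) * B = B * NormedSpace.exp (s • B) :=
      ((Commute.refl B).smul_left s).exp_left
    have := hc.smul hG'
    refine this.congr_deriv (Eq.symm ?_)
    rw [mul_smul, ← smul_add]
    congr 1
    simp only [hHdef, hGdef, sub_mul, smul_mul_assoc, one_mul, mul_sub, ← mul_assoc, hcomm,
      mul_smul_comm, neg_smul]
    abel
  refine ⟨‖R‖ + C / β, lam', hlam'pos, ?_⟩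
  intro t ht
  -- FTC
  have key : E t - E 0 = ∫ s in (0:ℝ)..t, Complex.exp (-(μ * s)) • H s :=
    (intervalIntegral.integral_eq_sub_of_hasDerivAt (fun s _ => hE s)
      (contD.intervalIntegrable 0 t)).symm
  have hE0 : E 0 = R := by
    simp [hEdef, hGdef]
  -- bound on the integrand
  have hDb : ∀ s ∈ Set.Icc (0:ℝ) t, ‖Complex.exp (-(μ * s)) • H s‖ ≤ C * Real.exp (β * s) := by
    intro s hs
    rw [norm_smul]
    have h1 : ‖Complex.exp (-(μ * s))‖ = Real.exp (-(ν * s)) := by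
      rw [Complex.norm_exp]
      congr 1
      simp [hνdef]
    rw [h1]
    calc Real.exp (-(ν * s)) * ‖H s‖ ≤ Real.exp (-(ν * s)) * (C * Real.exp (-lam * s)) := by
          gcongr
          exact hb s hs.1
      _ = C * Real.exp ((-ν - lam) * s) := by
          rw [show Real.exp (-(ν * s)) * (C * Real.exp (-lam * s))
              = C * (Real.exp (-(ν * s)) * Real.exp (-lam * s)) by ring, ← Real.exp_add]
          ring_nf
      _ ≤ C * Real.exp (β * s) := by
          refine mul_le_mul_of_nonneg_left (Real.exp_le_exp.2 ?_) hC
          nlinarith [hs.1, hlam'le]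
  -- integral of the bound
  have hIb : ∫ s in (0:ℝ)..t, C * Real.exp (β * s) = C / β * (Real.exp (β * t) - 1) := by
    have hder : ∀ s : ℝ, HasDerivAt (fun s => C / β * Real.exp (β * s)) (C * Real.exp (β * s)) s := by
      intro s
      have h1 : HasDerivAt (fun s : ℝ => β * s) β s := by
        simpa using (hasDerivAt_id s).const_mul β
      have h2 := h1.exp
      have h3 := h2.const_mul (C / β)
      refine h3.congr_deriv (Eq.symm ?_)
      field_simp
    rw [intervalIntegral.integral_eq_sub_of_hasDerivAt (fun s _ => hder s)
      ((continuous_const.mul ((continuous_const.mul continuous_id).rexp)).intervalIntegrable 0 t)]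
    simp [Real.exp_zero]
    ring
  -- assemble
  have key' : E t - R = ∫ s in (0:ℝ)..t, Complex.exp (-(μ * s)) • H s := by
    rw [← hE0]; exact key
  have hEt : ‖E t‖ ≤ ‖R‖ + C / β * Real.exp (β * t) := by
    have h1 : ‖E t‖ ≤ ‖E t - R‖ + ‖R‖ := by
      simpa using norm_add_le (E t - R) R
    refine h1.trans ?_
    calc ‖E t - R‖ + ‖R‖
        ≤ (∫ s in (0:ℝ)..t, C * Real.exp (β * s)) + ‖R‖ := by
          gcongr
          rw [key']
          calc ‖∫ s in (0:ℝ)..t, Complex.exp (-(μ * s)) • H s‖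
              ≤ ∫ s in (0:ℝ)..t, ‖Complex.exp (-(μ * s)) • H s‖ :=
                intervalIntegral.norm_integral_le_integral_norm ht
            _ ≤ ∫ s in (0:ℝ)..t, C * Real.exp (β * s) := by
                apply intervalIntegral.integral_mono_on ht
                · exact (contD.norm.intervalIntegrable 0 t)
                · exact ((continuous_const.mul ((continuous_const.mul continuous_id).rexp)).intervalIntegrable 0 t)
                · exact hDb
      _ ≤ C / β * Real.exp (β * t) + ‖R‖ := by
          rw [hIb]
          have : 0 ≤ C / β := by positivity
          nlinarith [Real.exp_pos (β * t)]
      _ = ‖R‖ + C / β * Real.exp (β * t) := by ring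
  have hGt : ‖G t‖ = Real.exp (ν * t) * ‖E t‖ := by
    have h1 : G t = Complex.exp (μ * t) • E t := by
      simp only [hEdef, smul_smul, ← Complex.exp_add]
      simp
    rw [h1, norm_smul, Complex.norm_exp]
    congr 2
    simp [hνdef]
  show ‖G t‖ ≤ _
  rw [hGt]
  calc Real.exp (ν * t) * ‖E t‖ ≤ Real.exp (ν * t) * (‖R‖ + C / β * Real.exp (β * t)) := by
        gcongr
    _ = ‖R‖ * Real.exp (ν * t) + C / β * Real.exp ((ν + β) * t) := by
        rw [add_mul, Real.exp_add]; ring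
    _ ≤ ‖R‖ * Real.exp (-lam' * t) + C / β * Real.exp (-lam' * t) := by
        have h2 : ν + β = -lam' := by rw [hβdef]; ring
        rw [h2]
        gcongr
    _ = (‖R‖ + C / β) * Real.exp (-lam' * t) := by ring

lemma list_decay (B : Matrix (Fin n) (Fin n) ℂ) :
    ∀ l : List ℂ, (∀ μ ∈ l, μ.re < 0) →
    (∃ C lam : ℝ, 0 < lam ∧ ∀ t : ℝ, 0 ≤ t →
      ‖NormedSpace.exp (t • B) * (l.map (fun μ => B - μ • 1)).prod‖ ≤ C * Real.exp (-lam * t)) →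
    ∃ C lam : ℝ, 0 < lam ∧ ∀ t : ℝ, 0 ≤ t →
      ‖NormedSpace.exp (t • B)‖ ≤ C * Real.exp (-lam * t) := by
  intro l
  induction l with
  | nil =>
    intro _ h
    simpa using h
  | cons μ l ih =>
    intro hneg h
    obtain ⟨C, lam, hlam, hb⟩ := h
    refine ih (fun ν hν => hneg ν (List.mem_cons_of_mem _ hν)) ?_
    have hμ : μ.re < 0 := hneg μ (List.mem_cons_self)
    have hb' : ∀ t : ℝ, 0 ≤ t →
        ‖NormedSpace.exp (t • B) * ((B - μ • 1) * (l.map (fun ν => B - ν • 1)).prod)‖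
          ≤ C * Real.exp (-lam * t) := by
      intro t ht
      simpa [List.map_cons, List.prod_cons] using hb t ht
    obtain ⟨C', lam', hlam', hb''⟩ :=
      ode_step B ((l.map (fun ν => B - ν • 1)).prod) μ hμ C lam hlam hb'
    exact ⟨C', lam', hlam', hb''⟩

lemma hurwitz_decay_complex (B : Matrix (Fin n) (Fin n) ℂ)
    (hB : ∀ μ ∈ spectrum ℂ B, μ.re < 0) :
    ∃ C lam : ℝ, 0 < lam ∧ ∀ t : ℝ, 0 ≤ t →
      ‖NormedSpace.exp (t • B)‖ ≤ C * Real.exp (-lam * t) := by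
  classical
  set p := B.charpoly with hp
  have hmonic : p.Monic := B.charpoly_monic
  have hsplit : p.Splits := IsAlgClosed.splits p
  have hroot : ∀ μ ∈ p.roots, μ ∈ spectrum ℂ B := by
    intro μ hμ
    have heval : p.eval μ = 0 := Polynomial.isRoot_of_mem_roots hμ
    rw [spectrum.mem_iff]
    intro hunit
    have hdet := (Matrix.isUnit_iff_isUnit_det _).mp hunit
    have hdet2 : (algebraMap ℂ (Matrix (Fin n) (Fin n) ℂ) μ - B).det = p.eval μ := by
      have h3 := (Polynomial.evalRingHom μ).map_det (B.charmatrix)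
      rw [hp, Matrix.charpoly,
        show Polynomial.eval μ B.charmatrix.det = (Polynomial.evalRingHom μ) B.charmatrix.det
          from rfl, h3]
      congr 1
      rw [RingHom.mapMatrix_apply]
      ext i j
      by_cases hij : i = j <;>
        simp [Matrix.charmatrix_apply, Matrix.map_apply, Matrix.algebraMap_matrix_apply,
          Matrix.diagonal_apply, hij]
    rw [hdet2, heval] at hdet
    exact not_isUnit_zero hdet
  set l : List ℂ := p.roots.toList with hl
  have hlneg : ∀ μ ∈ l, μ.re < 0 := fun μ hμ =>
    hB μ (hroot μ ((Multiset.mem_toList).mp hμ))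
  have hprod : (l.map (fun μ => B - μ • 1)).prod = 0 := by
    have hCH : Polynomial.aeval B p = 0 := B.aeval_self_charpoly
    have hfact : p = (l.map fun a => Polynomial.X - Polynomial.C a).prod := by
      have h1 := hsplit.eq_prod_roots_of_monic hmonic
      rwa [← Multiset.coe_toList p.roots, Multiset.map_coe, Multiset.prod_coe] at h1
    calc (l.map (fun μ => B - μ • 1)).prod
        = Polynomial.aeval B p := by
          rw [hfact, map_list_prod, List.map_map]
          congr 1
          refine List.map_congr_left fun a _ => ?_
          simp [Function.comp_def, map_sub, Polynomial.aeval_X, Polynomial.aeval_C,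
            Algebra.algebraMap_eq_smul_one]
      _ = 0 := hCH
  refine list_decay B l hlneg ⟨1, 1, one_pos, ?_⟩
  intro t ht
  rw [hprod]
  simp [Real.exp_nonneg]

lemma hurwitz_decay_real (A : Matrix (Fin n) (Fin n) ℝ)
    (hA : ∀ μ ∈ spectrum ℂ (A.map Complex.ofReal), μ.re < 0) :
    ∃ C lam : ℝ, 0 < lam ∧ ∀ t : ℝ, 0 ≤ t → ∀ i j,
      |NormedSpace.exp (t • A) i j| ≤ C * Real.exp (-lam * t) := by
  obtain ⟨C, lam, hlam, hb⟩ := hurwitz_decay_complex (A.map Complex.ofReal) hA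
  refine ⟨C, lam, hlam, fun t ht i j => ?_⟩
  have hcont : Continuous ((algebraMap ℝ ℂ).mapMatrix :
      Matrix (Fin n) (Fin n) ℝ →+* Matrix (Fin n) (Fin n) ℂ) := by
    apply continuous_matrix
    intro i j
    exact Complex.continuous_ofReal.comp ((continuous_apply j).comp (continuous_apply i))
  have hmap : (NormedSpace.exp (t • A)).map Complex.ofReal
      = NormedSpace.exp (t • A.map Complex.ofReal) := by
    have h1 := NormedSpace.map_exp ((algebraMap ℝ ℂ).mapMatrix :
      Matrix (Fin n) (Fin n) ℝ →+* Matrix (Fin n) (Fin n) ℂ) hcont (t • A)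
    have h2 : ((algebraMap ℝ ℂ).mapMatrix : Matrix (Fin n) (Fin n) ℝ →+*
        Matrix (Fin n) (Fin n) ℂ) (t • A) = t • A.map Complex.ofReal := by
      ext i j
      simp [RingHom.mapMatrix_apply, Matrix.map_apply, Complex.real_smul]
    rw [h2] at h1
    exact h1
  calc |NormedSpace.exp (t • A) i j|
      = ‖(NormedSpace.exp (t • A.map Complex.ofReal)) i j‖ := by
        rw [← hmap]
        simp [Matrix.map_apply]
    _ ≤ ‖NormedSpace.exp (t • A.map Complex.ofReal)‖ := entry_norm_le_linfty _ i j
    _ ≤ C * Real.exp (-lam * t) := hb t ht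

end HurwitzAux

/-- If `A` is Hurwitz and `Q` is symmetric positive definite, then
`t ↦ exp (t • Aᵀ) * Q * exp (t • A)` is (entrywise) integrable on `[0, ∞)`, and the entrywise
integral `P = ∫₀^∞ exp (t • Aᵀ) * Q * exp (t • A) dt` is symmetric positive definite and
solves the Lyapunov equation `Aᵀ * P + P * A = -Q`. -/
theorem stmt_3 {n : ℕ} (A Q : Matrix (Fin n) (Fin n) ℝ)
    (hA : ∀ μ ∈ spectrum ℂ (A.map Complex.ofReal), μ.re < 0)
    (hQsymm : Q.IsSymm) (hQ : Q.PosDef) :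
    ∀ P : Matrix (Fin n) (Fin n) ℝ,
      P = Matrix.of (fun i j => ∫ t in Set.Ici (0 : ℝ),
          (NormedSpace.exp (t • Aᵀ) * Q * NormedSpace.exp (t • A)) i j) →
      (∀ i j, IntegrableOn
          (fun t : ℝ => (NormedSpace.exp (t • Aᵀ) * Q * NormedSpace.exp (t • A)) i j)
          (Set.Ici 0)) ∧
        P.IsSymm ∧ P.PosDef ∧ Aᵀ * P + P * A = -Q := by
  obtain ⟨C0, lam, hlam, hdec0⟩ := hurwitz_decay_real A hA
  set C : ℝ := |C0| with hCdef
  have hC : 0 ≤ C := abs_nonneg _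
  have hdec : ∀ t : ℝ, 0 ≤ t → ∀ i j,
      |NormedSpace.exp (t • A) i j| ≤ C * Real.exp (-lam * t) := fun t ht i j =>
    (hdec0 t ht i j).trans (mul_le_mul_of_nonneg_right (le_abs_self C0) (Real.exp_nonneg _))
  set M : ℝ → Matrix (Fin n) (Fin n) ℝ :=
    fun t => NormedSpace.exp (t • Aᵀ) * Q * NormedSpace.exp (t • A) with hMdef
  have hMT : ∀ t : ℝ, NormedSpace.exp (t • Aᵀ) = (NormedSpace.exp (t • A))ᵀ := by
    intro t
    rw [show t • Aᵀ = (t • A)ᵀ by rw [Matrix.transpose_smul], Matrix.exp_transpose]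
  -- entry formula
  have hentry : ∀ t (i j : Fin n),
      M t i j = ∑ l, ∑ k, (NormedSpace.exp (t • A)) k i * Q k l
        * (NormedSpace.exp (t • A)) l j := by
    intro t i j
    simp only [hMdef, hMT, Matrix.mul_apply, Matrix.transpose_apply, Finset.sum_mul]
  set K : ℝ := (∑ l, ∑ k, |Q k l|) * (C * C) with hKdef
  have hK : 0 ≤ K := by positivity
  -- entry bound
  have hMb : ∀ t : ℝ, 0 ≤ t → ∀ i j, |M t i j| ≤ K * Real.exp (-(2 * lam) * t) := by
    intro t ht i j
    rw [hentry t i j]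
    calc |∑ l, ∑ k, (NormedSpace.exp (t • A)) k i * Q k l * (NormedSpace.exp (t • A)) l j|
        ≤ ∑ l, ∑ k, |(NormedSpace.exp (t • A)) k i * Q k l
            * (NormedSpace.exp (t • A)) l j| :=
          (Finset.abs_sum_le_sum_abs _ _).trans
            (Finset.sum_le_sum fun l _ => Finset.abs_sum_le_sum_abs _ _)
      _ ≤ ∑ l, ∑ k, |Q k l| * ((C * Real.exp (-lam * t)) * (C * Real.exp (-lam * t))) := by
          refine Finset.sum_le_sum fun l _ => Finset.sum_le_sum fun k _ => ?_
          rw [abs_mul, abs_mul]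
          calc |(NormedSpace.exp (t • A)) k i| * |Q k l| * |(NormedSpace.exp (t • A)) l j|
              ≤ (C * Real.exp (-lam * t)) * |Q k l| * (C * Real.exp (-lam * t)) := by
                have h1 := hdec t ht k i
                have h2 := hdec t ht l j
                have hCe : 0 ≤ C * Real.exp (-lam * t) := by positivity
                exact mul_le_mul (mul_le_mul h1 le_rfl (abs_nonneg _) hCe) h2 (abs_nonneg _)
                  (mul_nonneg hCe (abs_nonneg _))
            _ = |Q k l| * ((C * Real.exp (-lam * t)) * (C * Real.exp (-lam * t))) := by ring
      _ = K * Real.exp (-(2 * lam) * t) := by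
          have hexp2 : Real.exp (-lam * t) * Real.exp (-lam * t) = Real.exp (-(2 * lam) * t) := by
            rw [← Real.exp_add]; congr 1; ring
          have hc : (C * Real.exp (-lam * t)) * (C * Real.exp (-lam * t))
              = (C * C) * Real.exp (-(2 * lam) * t) := by rw [← hexp2]; ring
          simp only [hc, ← Finset.sum_mul]
          rw [hKdef]; ring
  -- continuity
  have hcontX : Continuous fun t : ℝ => NormedSpace.exp (t • A) := by
    letI : SeminormedRing (Matrix (Fin n) (Fin n) ℝ) := Matrix.linftyOpSemiNormedRing
    letI : NormedRing (Matrix (Fin n) (Fin n) ℝ) := Matrix.linftyOpNormedRing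
    letI : NormedAlgebra ℝ (Matrix (Fin n) (Fin n) ℝ) := Matrix.linftyOpNormedAlgebra
    letI : NormedAlgebra ℚ (Matrix (Fin n) (Fin n) ℝ) := Matrix.linftyOpNormedAlgebra
    exact NormedSpace.exp_continuous.comp (continuous_id.smul continuous_const)
  have hcontXT : Continuous fun t : ℝ => NormedSpace.exp (t • Aᵀ) := by
    letI : SeminormedRing (Matrix (Fin n) (Fin n) ℝ) := Matrix.linftyOpSemiNormedRing
    letI : NormedRing (Matrix (Fin n) (Fin n) ℝ) := Matrix.linftyOpNormedRing
    letI : NormedAlgebra ℝ (Matrix (Fin n) (Fin n) ℝ) := Matrix.linftyOpNormedAlgebra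
    letI : NormedAlgebra ℚ (Matrix (Fin n) (Fin n) ℝ) := Matrix.linftyOpNormedAlgebra
    exact NormedSpace.exp_continuous.comp (continuous_id.smul continuous_const)
  have hcontM : ∀ i j : Fin n, Continuous fun t => M t i j := by
    intro i j
    have h1 : Continuous M := (hcontXT.matrix_mul continuous_const).matrix_mul hcontX
    exact (continuous_apply j).comp ((continuous_apply i).comp h1)
  -- integrability of entries
  have hg : IntegrableOn (fun t : ℝ => K * Real.exp (-(2 * lam) * t)) (Set.Ici 0) := by
    rw [integrableOn_Ici_iff_integrableOn_Ioi]
    exact (exp_neg_integrableOn_Ioi 0 (by linarith)).const_mul K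
  have hint : ∀ i j : Fin n, IntegrableOn (fun t => M t i j) (Set.Ici 0) := by
    intro i j
    refine hg.mono' (hcontM i j).aestronglyMeasurable ?_
    rw [ae_restrict_iff' measurableSet_Ici]
    exact ae_of_all _ fun t ht => by simpa [Real.norm_eq_abs] using hMb t ht i j
  intro P hP
  -- symmetry of M t
  have hMsymm : ∀ t : ℝ, (M t)ᵀ = M t := by
    intro t
    simp only [hMdef, hMT]
    rw [Matrix.transpose_mul, Matrix.transpose_mul, Matrix.transpose_transpose, hQsymm.eq,
      Matrix.mul_assoc]
  have hPsymm : P.IsSymm := by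
    rw [Matrix.IsSymm]
    subst hP
    ext i j
    rw [Matrix.transpose_apply]
    simp only [Matrix.of_apply]
    have heq : ∀ t : ℝ, (NormedSpace.exp (t • Aᵀ) * Q * NormedSpace.exp (t • A)) j i
        = (NormedSpace.exp (t • Aᵀ) * Q * NormedSpace.exp (t • A)) i j :=
      fun t => (congrFun (congrFun (hMsymm t) j) i).symm
    simp only [heq]
  refine ⟨hint, hPsymm, ?_, ?_⟩
  · -- PosDef
    rw [Matrix.posDef_iff_dotProduct_mulVec]
    constructor
    · rw [Matrix.IsHermitian]
      ext i j
      rw [Matrix.conjTranspose_apply, star_trivial]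
      exact congrFun (congrFun hPsymm i) j
    · intro x hx
      have hstar : star x = x := by
        funext k; simp
      rw [hstar]
      -- rewrite quadratic form as integral
      have hint2 : ∀ i j : Fin n,
          IntegrableOn (fun t => x i * (M t i j * x j)) (Set.Ici 0) := fun i j =>
        ((hint i j).mul_const (x j)).const_mul (x i)
      have hq : x ⬝ᵥ (P *ᵥ x)
          = ∫ t in Set.Ici (0:ℝ), ∑ i, ∑ j, x i * (M t i j * x j) := by
        subst hP
        calc x ⬝ᵥ ((Matrix.of fun i j => ∫ t in Set.Ici (0:ℝ), M t i j) *ᵥ x)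
            = ∑ i, ∑ j, x i * ((∫ t in Set.Ici (0:ℝ), M t i j) * x j) := by
              simp [Matrix.mulVec, dotProduct, Finset.mul_sum]
          _ = ∑ i, ∑ j, ∫ t in Set.Ici (0:ℝ), x i * (M t i j * x j) := by
              refine Finset.sum_congr rfl fun i _ => Finset.sum_congr rfl fun j _ => ?_
              rw [← integral_mul_const, ← integral_const_mul]
          _ = ∫ t in Set.Ici (0:ℝ), ∑ i, ∑ j, x i * (M t i j * x j) := by
              rw [integral_finset_sum _ fun i _ =>
                integrable_finset_sum _ fun j _ => hint2 i j]
              exact Finset.sum_congr rfl fun i _ =>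
                (integral_finset_sum _ fun j _ => hint2 i j).symm
      rw [hq]
      set q : ℝ → ℝ := fun t => ∑ i, ∑ j, x i * (M t i j * x j) with hqdef
      have hqpos : ∀ t : ℝ, 0 < q t := by
        intro t
        set y : Fin n → ℝ := NormedSpace.exp (t • A) *ᵥ x with hydef
        have hinv : NormedSpace.exp (-(t • A)) * NormedSpace.exp (t • A) = 1 := by
          letI : SeminormedRing (Matrix (Fin n) (Fin n) ℝ) := Matrix.linftyOpSemiNormedRing
          letI : NormedRing (Matrix (Fin n) (Fin n) ℝ) := Matrix.linftyOpNormedRing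
          letI : NormedAlgebra ℝ (Matrix (Fin n) (Fin n) ℝ) := Matrix.linftyOpNormedAlgebra
          letI : NormedAlgebra ℚ (Matrix (Fin n) (Fin n) ℝ) := Matrix.linftyOpNormedAlgebra
          refine (NormedSpace.exp_add_of_commute ((Commute.refl (t • A)).neg_left)).symm.trans ?_
          rw [neg_add_cancel, NormedSpace.exp_zero]
        have hy : y ≠ 0 := by
          intro hy0
          apply hx
          have h1 : (1 : Matrix (Fin n) (Fin n) ℝ) *ᵥ x = x := Matrix.one_mulVec x
          rw [← hinv, ← Matrix.mulVec_mulVec, ← hydef, hy0, Matrix.mulVec_zero] at h1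
          exact h1.symm
        have hQy := (Matrix.posDef_iff_dotProduct_mulVec.mp hQ).2 hy
        have hstary : star y = y := by funext k; simp
        rw [hstary] at hQy
        have hform : q t = y ⬝ᵥ (Q *ᵥ y) := by
          have h1 : q t = x ⬝ᵥ (M t *ᵥ x) := by
            simp [hqdef, dotProduct, Matrix.mulVec, Finset.mul_sum]
          rw [h1, hMdef]
          simp only [hMT]
          rw [← Matrix.mulVec_mulVec, ← Matrix.mulVec_mulVec, Matrix.dotProduct_mulVec,
            Matrix.vecMul_transpose, ← hydef]
        rw [hform]
        exact hQy
      have hqint : IntegrableOn q (Set.Ici 0) :=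
        integrable_finset_sum _ fun i _ => integrable_finset_sum _ fun j _ => hint2 i j
      have hqnn : 0 ≤ᵐ[volume.restrict (Set.Ici (0:ℝ))] q :=
        ae_of_all _ fun t => (hqpos t).le
      rw [setIntegral_pos_iff_support_of_nonneg_ae hqnn hqint]
      have hsupp : Function.support q ∩ Set.Ici 0 = Set.Ici 0 := by
        rw [Set.inter_eq_right]
        intro t _
        exact (hqpos t).ne'
      rw [hsupp, Real.volume_Ici]
      exact ENNReal.zero_lt_top
  · -- Lyapunov equation
    -- entrywise derivative
    have hderiv : ∀ (i j : Fin n) (t : ℝ),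
        HasDerivAt (fun s => M s i j) ((Aᵀ * M t + M t * A) i j) t := by
      letI : SeminormedRing (Matrix (Fin n) (Fin n) ℝ) := Matrix.linftyOpSemiNormedRing
      letI : NormedRing (Matrix (Fin n) (Fin n) ℝ) := Matrix.linftyOpNormedRing
      letI : NormedAlgebra ℝ (Matrix (Fin n) (Fin n) ℝ) := Matrix.linftyOpNormedAlgebra
      intro i j t
      have h1 := hasDerivAt_exp_smul_const' Aᵀ t
      have h2 := hasDerivAt_exp_smul_const A t
      have h3 := (h1.mul_const Q).mul h2
      have h4 : HasDerivAt M (Aᵀ * M t + M t * A) t := by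
        refine h3.congr_deriv (Eq.symm ?_)
        simp only [hMdef, Matrix.mul_assoc]
        rfl
      let L : Matrix (Fin n) (Fin n) ℝ →ₗ[ℝ] ℝ :=
        { toFun := fun m => m i j
          map_add' := fun a b => rfl
          map_smul' := fun c a => rfl }
      have h5 := L.toContinuousLinearMap.hasFDerivAt.comp_hasDerivAt t h4
      exact h5
    have htend : ∀ i j : Fin n,
        Filter.Tendsto (fun t => M t i j) Filter.atTop (nhds 0) := by
      intro i j
      have hgt : Filter.Tendsto (fun t : ℝ => K * Real.exp (-(2 * lam) * t))
          Filter.atTop (nhds 0) := by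
        have h1 : Filter.Tendsto (fun t : ℝ => -(2 * lam) * t) Filter.atTop Filter.atBot := by
          apply Filter.Tendsto.const_mul_atTop_of_neg (by linarith : -(2 * lam) < 0)
          exact Filter.tendsto_id
        have h2 := Real.tendsto_exp_atBot.comp h1
        simpa using h2.const_mul K
      have hgt' : Filter.Tendsto (fun t : ℝ => -(K * Real.exp (-(2 * lam) * t)))
          Filter.atTop (nhds 0) := by simpa using hgt.neg
      refine tendsto_of_tendsto_of_tendsto_of_le_of_le' hgt' hgt ?_ ?_
      · filter_upwards [Filter.eventually_ge_atTop (0:ℝ)] with t ht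
        have := hMb t ht i j
        have := abs_le.mp this
        linarith [this.1]
      · filter_upwards [Filter.eventually_ge_atTop (0:ℝ)] with t ht
        exact (le_abs_self _).trans (hMb t ht i j)
    have hM0 : M 0 = Q := by
      simp only [hMdef, zero_smul, NormedSpace.exp_zero, one_mul, mul_one]
    have hint' : ∀ i j : Fin n,
        IntegrableOn (fun t => (Aᵀ * M t + M t * A) i j) (Set.Ici 0) := by
      intro i j
      simp only [Matrix.add_apply, Matrix.mul_apply]
      apply Integrable.add
      · exact integrable_finset_sum _ fun k _ => (hint k j).const_mul _
      · exact integrable_finset_sum _ fun k _ => (hint i k).mul_const _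
    have hFTC : ∀ i j : Fin n,
        (∫ t in Set.Ici (0:ℝ), (Aᵀ * M t + M t * A) i j) = -(Q i j) := by
      intro i j
      rw [integral_Ici_eq_integral_Ioi]
      rw [integral_Ioi_of_hasDerivAt_of_tendsto' (fun t _ => hderiv i j t)
        ((hint' i j).mono_set Set.Ioi_subset_Ici_self) (htend i j)]
      rw [hM0]
      simp
    -- assemble
    subst hP
    ext i j
    show (∑ k, Aᵀ i k * ∫ t in Set.Ici (0:ℝ), M t k j)
        + (∑ k, (∫ t in Set.Ici (0:ℝ), M t i k) * A k j) = -(Q i j)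
    have hintf : Integrable (fun t => ∑ k, Aᵀ i k * M t k j)
        (volume.restrict (Set.Ici (0:ℝ))) :=
      integrable_finset_sum _ fun k _ => (hint k j).const_mul _
    have hintg : Integrable (fun t => ∑ k, M t i k * A k j)
        (volume.restrict (Set.Ici (0:ℝ))) :=
      integrable_finset_sum _ fun k _ => (hint i k).mul_const _
    calc (∑ k, Aᵀ i k * ∫ t in Set.Ici (0:ℝ), M t k j)
          + (∑ k, (∫ t in Set.Ici (0:ℝ), M t i k) * A k j)
        = (∑ k, ∫ t in Set.Ici (0:ℝ), Aᵀ i k * M t k j)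
          + (∑ k, ∫ t in Set.Ici (0:ℝ), M t i k * A k j) := by
          congr 1
          · exact Finset.sum_congr rfl fun k _ => (integral_const_mul _ _).symm
          · exact Finset.sum_congr rfl fun k _ => (integral_mul_const _ _).symm
      _ = (∫ t in Set.Ici (0:ℝ), ∑ k, Aᵀ i k * M t k j)
          + (∫ t in Set.Ici (0:ℝ), ∑ k, M t i k * A k j) := by
          rw [integral_finset_sum _ fun k _ => (hint k j).const_mul _,
            integral_finset_sum _ fun k _ => (hint i k).mul_const _]
      _ = ∫ t in Set.Ici (0:ℝ), ((∑ k, Aᵀ i k * M t k j) + ∑ k, M t i k * A k j) :=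
          (integral_add hintf hintg).symm
      _ = ∫ t in Set.Ici (0:ℝ), (Aᵀ * M t + M t * A) i j := by
          refine integral_congr_ae (ae_of_all _ fun t => ?_)
          simp [Matrix.add_apply, Matrix.mul_apply]
      _ = -(Q i j) := hFTC i j
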